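/- Let R be a commutative ring with identity, N a module over R, and d ≥ 1. Let f : Nilp_d(R) → N_nc be a nc function on the nc set of jointly nilpotent d-tuples of square matrices over R. For each word w = g_{i_1}···g_{i_ℓ} ∈ G_d, let T_w ∈ (R^{(ℓ+1)×(ℓ+1)})^d be the jointly nilpotent tuple whose j-th matrix has (k, k+1) entry equal to 1 exactly when i_k = j (1 ≤ k ≤ ℓ) and all other entries 0, and let c_w ∈ N be the (1, ℓ+1) entry of f(T_w) (for the empty word, c_∅ := f(0_{1×1}) ∈ N ≅ N^{1×1}). Then for every n ≥ 1 and every jointly nilpotent X = (X_1,...,X_d) ∈ (R^{n×n})^d: f(X) = Σ_{w ∈ G_d} X^w • c_w, where the sum has finitely many nonzero terms (since X^w = 0 for all sufficiently long words w). -/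

import Mathlib

open Matrix

/-- Product of a scalar matrix with a matrix over a module. -/
def scalMul {R : Type*} [CommRing R] {M : Type*} [AddCommGroup M] [Module R M]
    {p n m : ℕ} (S : Matrix (Fin p) (Fin n) R) (X : Matrix (Fin n) (Fin m) M) :
    Matrix (Fin p) (Fin m) M :=
  Matrix.of fun i j => ∑ k, S i k • X k j

/-- Product of a matrix over a module with a scalar matrix. -/
def mulScal {R : Type*} [CommRing R] {M : Type*} [AddCommGroup M] [Module R M]
    {n m q : ℕ} (X : Matrix (Fin n) (Fin m) M) (T : Matrix (Fin m) (Fin q) R) :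
    Matrix (Fin n) (Fin q) M :=
  Matrix.of fun i j => ∑ k, T k j • X i k

/-- Direct sum of two square matrices over a module. -/
def dSum {M : Type*} [AddCommGroup M] {n m : ℕ}
    (X : Matrix (Fin n) (Fin n) M) (Y : Matrix (Fin m) (Fin m) M) :
    Matrix (Fin (n + m)) (Fin (n + m)) M :=
  (Matrix.reindex finSumFinEquiv finSumFinEquiv) (Matrix.fromBlocks X 0 0 Y)

/-- Componentwise direct sum of `d`-tuples of square matrices. -/
def tDSum {R : Type*} [CommRing R] {d n m : ℕ}
    (X : Fin d → Matrix (Fin n) (Fin n) R) (Y : Fin d → Matrix (Fin m) (Fin m) R) :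
    Fin d → Matrix (Fin (n + m)) (Fin (n + m)) R :=
  fun i => (Matrix.reindex finSumFinEquiv finSumFinEquiv) (Matrix.fromBlocks (X i) 0 0 (Y i))

/-- A `d`-tuple of square matrices is jointly nilpotent. -/
def JointlyNilp {R : Type*} [CommRing R] {d n : ℕ}
    (X : Fin d → Matrix (Fin n) (Fin n) R) : Prop :=
  ∃ κ : ℕ, ∀ w : List (Fin d), κ ≤ w.length → (w.map X).prod = 0

/-- The jointly nilpotent tuple `T_w` associated to a word `w`: the `j`-th matrix has
`(k, k+1)` entry `1` exactly when the `k`-th letter of `w` is `j`. -/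
def wordTuple (R : Type*) [CommRing R] {d : ℕ} (w : List (Fin d)) :
    Fin d → Matrix (Fin (w.length + 1)) (Fin (w.length + 1)) R :=
  fun j => Matrix.of fun a b =>
    if h : (a : ℕ) + 1 = (b : ℕ) then
      (if w.get ⟨(a : ℕ), by have := b.isLt; omega⟩ = j then 1 else 0)
    else 0

section Aux
variable {R : Type*} [CommRing R] {N : Type*} [AddCommGroup N] [Module R N] {d : ℕ}

lemma tDSum_word_prod {n m : ℕ} (X : Fin d → Matrix (Fin n) (Fin n) R)
    (Y : Fin d → Matrix (Fin m) (Fin m) R) (w : List (Fin d)) :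
    (w.map (tDSum X Y)).prod =
      (Matrix.reindex finSumFinEquiv finSumFinEquiv)
        (Matrix.fromBlocks ((w.map X).prod) 0 0 ((w.map Y).prod)) := by
  induction w with
  | nil =>
      simp [Matrix.reindex_apply, Matrix.fromBlocks_one]
  | cons j t ih =>
      simp only [List.map_cons, List.prod_cons, ih, tDSum, Matrix.reindex_apply,
        Matrix.submatrix_mul_equiv, Matrix.fromBlocks_multiply]
      simp

lemma jointlyNilp_tDSum {n m : ℕ} {X : Fin d → Matrix (Fin n) (Fin n) R}
    {Y : Fin d → Matrix (Fin m) (Fin m) R} (hX : JointlyNilp X) (hY : JointlyNilp Y) :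
    JointlyNilp (tDSum X Y) := by
  obtain ⟨κ₁, h1⟩ := hX
  obtain ⟨κ₂, h2⟩ := hY
  refine ⟨max κ₁ κ₂, fun w hw => ?_⟩
  rw [tDSum_word_prod, h1 w (le_trans (le_max_left _ _) hw),
    h2 w (le_trans (le_max_right _ _) hw)]
  simp [Matrix.reindex_apply]


lemma intertwine
    (f : ∀ n : ℕ, (Fin d → Matrix (Fin n) (Fin n) R) → Matrix (Fin n) (Fin n) N)
    (hds : ∀ (n m : ℕ) (X : Fin d → Matrix (Fin n) (Fin n) R)
      (Y : Fin d → Matrix (Fin m) (Fin m) R), JointlyNilp X → JointlyNilp Y →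
      f (n + m) (tDSum X Y) = dSum (f n X) (f m Y))
    (hsim : ∀ (n : ℕ) (X : Fin d → Matrix (Fin n) (Fin n) R)
      (S T : Matrix (Fin n) (Fin n) R), JointlyNilp X → S * T = 1 → T * S = 1 →
      JointlyNilp (fun i => S * X i * T) →
      f n (fun i => S * X i * T) = scalMul S (mulScal (f n X) T))
    {m n : ℕ} (Y : Fin d → Matrix (Fin m) (Fin m) R) (X : Fin d → Matrix (Fin n) (Fin n) R)
    (hY : JointlyNilp Y) (hX : JointlyNilp X)
    (A : Matrix (Fin m) (Fin n) R) (hA : ∀ i, Y i * A = A * X i) :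
    scalMul A (f n X) = mulScal (f m Y) A := by
  set e : Fin m ⊕ Fin n ≃ Fin (m + n) := finSumFinEquiv with he
  set S : Matrix (Fin (m + n)) (Fin (m + n)) R :=
    (Matrix.reindex e e) (Matrix.fromBlocks 1 A 0 1) with hS
  set T : Matrix (Fin (m + n)) (Fin (m + n)) R :=
    (Matrix.reindex e e) (Matrix.fromBlocks 1 (-A) 0 1) with hT
  have hST : S * T = 1 := by
    simp [hS, hT, Matrix.reindex_apply, Matrix.submatrix_mul_equiv,
      Matrix.fromBlocks_multiply, Matrix.fromBlocks_one]
  have hTS : T * S = 1 := by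
    simp [hS, hT, Matrix.reindex_apply, Matrix.submatrix_mul_equiv,
      Matrix.fromBlocks_multiply, Matrix.fromBlocks_one]
  have hconj : (fun i => S * tDSum Y X i * T) = tDSum Y X := by
    funext i
    simp only [hS, hT, he, tDSum, Matrix.reindex_apply, Matrix.submatrix_mul_equiv,
      Matrix.fromBlocks_multiply]
    congr 1
    simp [Matrix.mul_one, hA i]
  have hZ : JointlyNilp (tDSum Y X) := jointlyNilp_tDSum hY hX
  have h1 := hsim (m + n) (tDSum Y X) S T hZ hST hTS (by rw [hconj]; exact hZ)
  rw [hconj, hds m n Y X hY hX] at h1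
  -- h1 : dSum (f m Y) (f n X) = scalMul S (mulScal (dSum (f m Y) (f n X)) T)
  have h3 : ∀ a b, dSum (f m Y) (f n X) (e (Sum.inl a)) (e (Sum.inr b)) =
      scalMul S (mulScal (dSum (f m Y) (f n X)) T) (e (Sum.inl a)) (e (Sum.inr b)) := by
    intro a b; rw [← h1]
  ext a b
  have h4 := h3 a b
  simp only [dSum, scalMul, mulScal, hS, hT, he, Matrix.reindex_apply, Matrix.submatrix_apply,
    Matrix.of_apply, Equiv.symm_apply_apply, Matrix.fromBlocks_apply₁₂,
    ← e.sum_comp, Fintype.sum_sum_type, Matrix.fromBlocks_apply₁₁,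
    Matrix.fromBlocks_apply₂₁, Matrix.fromBlocks_apply₂₂, Matrix.one_apply,
    Matrix.zero_apply, Matrix.neg_apply, ite_smul, one_smul, zero_smul, smul_zero,
    Finset.sum_ite_eq, Finset.sum_ite_eq', Finset.mem_univ, if_true, neg_smul,
    Finset.sum_neg_distrib, zero_add, add_zero, ite_mul, one_mul, zero_mul,
    mul_ite, mul_one, mul_zero, smul_ite] at h4
  simp only [Finset.sum_const_zero, add_zero, zero_add] at h4
  simp only [scalMul, mulScal, Matrix.of_apply]
  have h5 := h4.symm
  rw [add_comm, add_neg_eq_zero] at h5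
  exact h5


/-- Words of length `< κ` in `d` letters. -/
abbrev Word (d κ : ℕ) := (ℓ : Fin κ) × (Fin (ℓ : ℕ) → Fin d)

def wd {d κ : ℕ} (lam : Word d κ) : List (Fin d) := List.ofFn lam.2

lemma wd_length_lt {κ : ℕ} (lam : Word d κ) : (wd lam).length < κ := by
  simpa [wd] using lam.1.isLt

lemma wd_injective {κ : ℕ} : Function.Injective (wd (d := d) (κ := κ)) := by
  rintro ⟨⟨ℓ₁, h₁⟩, v₁⟩ ⟨⟨ℓ₂, h₂⟩, v₂⟩ h
  have hl : ℓ₁ = ℓ₂ := by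
    have := congrArg List.length h
    simpa [wd] using this
  subst hl
  simp only [wd] at h
  exact Sigma.ext rfl (heq_of_eq (List.ofFn_injective h))

def toWord {κ : ℕ} (w : List (Fin d)) (h : w.length < κ) : Word d κ :=
  ⟨⟨w.length, h⟩, w.get⟩

lemma wd_toWord {κ : ℕ} (w : List (Fin d)) (h : w.length < κ) : wd (toWord w h) = w :=
  List.ofFn_get w

noncomputable def wEquiv (d κ : ℕ) : Word d κ ≃ Fin (Fintype.card (Word d κ)) :=
  Fintype.equivFin (Word d κ)

/-- The universal jointly nilpotent tuple of order `κ`. -/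
noncomputable def Smat (R : Type*) [CommRing R] (d κ : ℕ) (j : Fin d) :
    Matrix (Fin (Fintype.card (Word d κ))) (Fin (Fintype.card (Word d κ))) R :=
  Matrix.of fun p q =>
    if wd ((wEquiv d κ).symm p) = j :: wd ((wEquiv d κ).symm q) then 1 else 0

lemma Smat_word_prod {κ : ℕ} (u : List (Fin d)) (p q : Fin (Fintype.card (Word d κ))) :
    ((u.map (Smat R d κ)).prod) p q =
      if wd ((wEquiv d κ).symm p) = u ++ wd ((wEquiv d κ).symm q) then 1 else 0 := by
  set E := wEquiv d κ
  induction u generalizing p with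
  | nil =>
      rw [List.map_nil, List.prod_nil]
      by_cases h : p = q
      · subst h; simp [Matrix.one_apply]
      · rw [Matrix.one_apply_ne h, if_neg]
        intro hc
        exact h (by simpa using congrArg E (wd_injective hc))
  | cons j u ih =>
      rw [List.map_cons, List.prod_cons, Matrix.mul_apply]
      simp only [Smat, Matrix.of_apply, ih]
      by_cases hex : (u ++ wd (E.symm q)).length < κ
      · set μ := toWord (u ++ wd (E.symm q)) hex with hμdef
        have hμ : wd μ = u ++ wd (E.symm q) := wd_toWord _ _
        rw [Finset.sum_eq_single (E μ)]
        · rw [Equiv.symm_apply_apply, hμ, if_pos rfl, mul_one, List.cons_append]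
        · intro r _ hr
          have hz : (if wd (E.symm r) = u ++ wd (E.symm q) then (1:R) else 0) = 0 := by
            rw [if_neg]
            intro hc
            exact hr (by rw [← (wd_injective (hc.trans hμ.symm) : E.symm r = μ),
              Equiv.apply_symm_apply])
          rw [hz, mul_zero]
        · intro hmem; exact absurd (Finset.mem_univ _) hmem
      · rw [Finset.sum_eq_zero, eq_comm, if_neg]
        · intro hc
          have hlt := wd_length_lt (E.symm p)
          rw [hc] at hlt
          simp only [List.length_cons, List.length_append] at hlt hex
          omega
        · intro r _
          have hz : (if wd (E.symm r) = u ++ wd (E.symm q) then (1:R) else 0) = 0 := by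
            rw [if_neg]
            intro hc
            have := wd_length_lt (E.symm r)
            rw [hc] at this
            exact hex this
          rw [hz, mul_zero]

lemma jointlyNilp_Smat {κ : ℕ} : JointlyNilp (Smat R d κ) := by
  refine ⟨κ, fun w hw => ?_⟩
  ext p q
  rw [Smat_word_prod, Matrix.zero_apply, if_neg]
  intro hc
  have := wd_length_lt ((wEquiv d κ).symm p)
  rw [hc] at this
  simp only [List.length_append] at this
  omega

lemma wordTuple_shift (w : List (Fin d)) (u : List (Fin d))
    (a b : Fin (w.length + 1)) (h : (b : ℕ) ≠ (a : ℕ) + u.length) :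
    ((u.map (wordTuple R w)).prod) a b = 0 := by
  induction u generalizing a with
  | nil =>
      rw [List.map_nil, List.prod_nil]
      exact Matrix.one_apply_ne (by intro hc; subst hc; simp at h)
  | cons j u ih =>
      rw [List.map_cons, List.prod_cons, Matrix.mul_apply]
      refine Finset.sum_eq_zero fun m _ => ?_
      by_cases hm : (a : ℕ) + 1 = (m : ℕ)
      · rw [ih m (by simp only [List.length_cons] at h; omega), mul_zero]
      · simp [wordTuple, hm]

lemma jointlyNilp_wordTuple (w : List (Fin d)) : JointlyNilp (wordTuple R w) := by
  refine ⟨w.length + 1, fun u hu => ?_⟩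
  ext a b
  rw [wordTuple_shift, Matrix.zero_apply]
  have hb := b.isLt
  omega

lemma smat_entry_eq_wordTuple_entry
    (f : ∀ n : ℕ, (Fin d → Matrix (Fin n) (Fin n) R) → Matrix (Fin n) (Fin n) N)
    (hds : ∀ (n m : ℕ) (X : Fin d → Matrix (Fin n) (Fin n) R)
      (Y : Fin d → Matrix (Fin m) (Fin m) R), JointlyNilp X → JointlyNilp Y →
      f (n + m) (tDSum X Y) = dSum (f n X) (f m Y))
    (hsim : ∀ (n : ℕ) (X : Fin d → Matrix (Fin n) (Fin n) R)
      (S T : Matrix (Fin n) (Fin n) R), JointlyNilp X → S * T = 1 → T * S = 1 →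
      JointlyNilp (fun i => S * X i * T) →
      f n (fun i => S * X i * T) = scalMul S (mulScal (f n X) T))
    {κ : ℕ} (hκ : ([] : List (Fin d)).length < κ) (w : List (Fin d)) (hw : w.length < κ) :
    f (Fintype.card (Word d κ)) (Smat R d κ)
        (wEquiv d κ (toWord w hw)) (wEquiv d κ (toWord [] hκ))
      = f (w.length + 1) (wordTuple R w) 0 (Fin.last w.length) := by
  set E := wEquiv d κ with hE
  set B : Matrix (Fin (w.length + 1)) (Fin (Fintype.card (Word d κ))) R :=
    Matrix.of fun k q => if wd (E.symm q) = w.drop (k : ℕ) then 1 else 0 with hBdef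
  have hdroplen : ∀ k : ℕ, (w.drop k).length < κ :=
    fun k => lt_of_le_of_lt (by simpa using Nat.sub_le _ _) hw
  have hB : ∀ j, wordTuple R w j * B = B * Smat R d κ j := by
    intro j
    ext k q
    rw [Matrix.mul_apply, Matrix.mul_apply]
    have hRHS : ∑ r, B k r * Smat R d κ j r q
        = if w.drop (k : ℕ) = j :: wd (E.symm q) then 1 else 0 := by
      rw [Finset.sum_eq_single (E (toWord (w.drop (k : ℕ)) (hdroplen k)))]
      · simp [hBdef, Smat, wd_toWord, hE]
      · intro r _ hr
        have hz : (if wd (E.symm r) = w.drop (k : ℕ) then (1:R) else 0) = 0 := by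
          rw [if_neg]
          intro hc
          exact hr (by rw [← (wd_injective (hc.trans (wd_toWord _ (hdroplen k)).symm) :
            E.symm r = _), Equiv.apply_symm_apply])
        simp only [hBdef, Matrix.of_apply]
        rw [hz, zero_mul]
      · intro hmem; exact absurd (Finset.mem_univ _) hmem
    have hLHS : ∑ m, wordTuple R w j k m * B m q
        = if w.drop (k : ℕ) = j :: wd (E.symm q) then 1 else 0 := by
      by_cases hk : (k : ℕ) < w.length
      · rw [Finset.sum_eq_single (⟨(k : ℕ) + 1, by omega⟩ : Fin (w.length + 1))]
        · simp only [wordTuple, hBdef, Matrix.of_apply]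
          rw [dif_pos trivial, List.drop_eq_getElem_cons hk]
          simp only [List.cons.injEq, List.get_eq_getElem]
          by_cases h1 : w[(k : ℕ)]'hk = j <;>
            by_cases h2 : wd (E.symm q) = List.drop ((k : ℕ) + 1) w <;>
              (simp [h1, h2]; (try rw [if_neg (fun hc => h2 hc.symm)]); try exact fun hc => absurd hc.symm h2)
        · intro m _ hm
          have hz : wordTuple R w j k m = 0 := by
            simp only [wordTuple, Matrix.of_apply]
            rw [dif_neg]
            intro hc
            exact hm (Fin.ext hc.symm)
          rw [hz, zero_mul]
        · intro hmem; exact absurd (Finset.mem_univ _) hmem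
      · have hk' : (k : ℕ) = w.length := by have := k.isLt; omega
        rw [Finset.sum_eq_zero, eq_comm, if_neg]
        · rw [hk', List.drop_length]
          simp
        · intro m _
          have hz : wordTuple R w j k m = 0 := by
            simp only [wordTuple, Matrix.of_apply]
            rw [dif_neg]
            have := m.isLt
            omega
          rw [hz, zero_mul]
    rw [hLHS, hRHS]
  have key := intertwine f hds hsim (wordTuple R w) (Smat R d κ)
    (jointlyNilp_wordTuple w) jointlyNilp_Smat B hB
  have key2 : scalMul B (f _ (Smat R d κ)) 0 (E (toWord [] hκ))
      = mulScal (f _ (wordTuple R w)) B 0 (E (toWord [] hκ)) := by rw [key]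
  have hL : scalMul B (f _ (Smat R d κ)) 0 (E (toWord [] hκ))
      = f _ (Smat R d κ) (E (toWord w hw)) (E (toWord [] hκ)) := by
    rw [scalMul, Matrix.of_apply, Finset.sum_eq_single (E (toWord w hw))]
    · simp only [hBdef, Matrix.of_apply, Equiv.symm_apply_apply, wd_toWord]
      rw [if_pos (by simp), one_smul]
    · intro r _ hr
      have hz : B 0 r = 0 := by
        simp only [hBdef, Matrix.of_apply]
        rw [if_neg]
        intro hc
        simp only [Fin.val_zero, List.drop_zero] at hc
        exact hr (by rw [← (wd_injective (hc.trans (wd_toWord _ hw).symm) : E.symm r = _),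
          Equiv.apply_symm_apply])
      rw [hz, zero_smul]
    · intro hmem; exact absurd (Finset.mem_univ _) hmem
  have hR : mulScal (f _ (wordTuple R w)) B 0 (E (toWord [] hκ))
      = f (w.length + 1) (wordTuple R w) 0 (Fin.last w.length) := by
    rw [mulScal, Matrix.of_apply, Finset.sum_eq_single (Fin.last w.length)]
    · simp only [hBdef, Matrix.of_apply, Equiv.symm_apply_apply, wd_toWord]
      rw [if_pos (by simp [wd, Fin.last]), one_smul]
    · intro m _ hm
      have hz : B m (E (toWord [] hκ)) = 0 := by
        simp only [hBdef, Matrix.of_apply, Equiv.symm_apply_apply, wd_toWord]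
        rw [if_neg]
        intro hc
        have : w.length ≤ (m : ℕ) := by
          have := congrArg List.length hc
          simp only [List.length_nil, List.length_drop] at this
          omega
        exact hm (Fin.ext (by have := m.isLt; simp [Fin.last]; omega))
      rw [hz, zero_smul]
    · intro hmem; exact absurd (Finset.mem_univ _) hmem
  rw [← hL, key2, hR]

lemma expansion_entry
    (f : ∀ n : ℕ, (Fin d → Matrix (Fin n) (Fin n) R) → Matrix (Fin n) (Fin n) N)
    (hds : ∀ (n m : ℕ) (X : Fin d → Matrix (Fin n) (Fin n) R)
      (Y : Fin d → Matrix (Fin m) (Fin m) R), JointlyNilp X → JointlyNilp Y →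
      f (n + m) (tDSum X Y) = dSum (f n X) (f m Y))
    (hsim : ∀ (n : ℕ) (X : Fin d → Matrix (Fin n) (Fin n) R)
      (S T : Matrix (Fin n) (Fin n) R), JointlyNilp X → S * T = 1 → T * S = 1 →
      JointlyNilp (fun i => S * X i * T) →
      f n (fun i => S * X i * T) = scalMul S (mulScal (f n X) T))
    {n κ : ℕ} (hκ : ([] : List (Fin d)).length < κ) (X : Fin d → Matrix (Fin n) (Fin n) R)
    (h : ∀ w : List (Fin d), κ ≤ w.length → (w.map X).prod = 0) (a b : Fin n) :
    f n X a b = ∑ lam : Word d κ,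
      (((wd lam).map X).prod a b) •
        f (Fintype.card (Word d κ)) (Smat R d κ) (wEquiv d κ lam)
          (wEquiv d κ (toWord [] hκ)) := by
  set E := wEquiv d κ with hE
  set A : Matrix (Fin n) (Fin (Fintype.card (Word d κ))) R :=
    Matrix.of fun c q => ((wd (E.symm q)).map X).prod c b with hAdef
  have hA : ∀ i, X i * A = A * Smat R d κ i := by
    intro i
    ext c q
    rw [Matrix.mul_apply, Matrix.mul_apply]
    have hL : ∑ r, X i c r * A r q = ((i :: wd (E.symm q)).map X).prod c b := by
      rw [List.map_cons, List.prod_cons, Matrix.mul_apply]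
      simp [hAdef]
    have hR : ∑ r, A c r * Smat R d κ i r q = ((i :: wd (E.symm q)).map X).prod c b := by
      by_cases hex : (i :: wd (E.symm q)).length < κ
      · rw [Finset.sum_eq_single (E (toWord _ hex))]
        · simp [hAdef, Smat, wd_toWord, hE]
        · intro r _ hr
          have hz : (if wd (E.symm r) = i :: wd (E.symm q) then (1:R) else 0) = 0 := by
            rw [if_neg]
            intro hc
            exact hr (by rw [← (wd_injective (hc.trans (wd_toWord _ hex).symm) :
              E.symm r = _), Equiv.apply_symm_apply])
          simp only [hAdef, Matrix.of_apply, Smat]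
          rw [hz, mul_zero]
        · intro hmem; exact absurd (Finset.mem_univ _) hmem
      · rw [h _ (Nat.not_lt.mp hex), Matrix.zero_apply]
        refine Finset.sum_eq_zero fun r _ => ?_
        have hz : (if wd (E.symm r) = i :: wd (E.symm q) then (1:R) else 0) = 0 := by
          rw [if_neg]
          intro hc
          have hlt := wd_length_lt (E.symm r)
          rw [hc] at hlt
          exact hex hlt
        simp only [hAdef, Matrix.of_apply, Smat]
        rw [hz, mul_zero]
    rw [hL, hR]
  have key := intertwine f hds hsim X (Smat R d κ) ⟨κ, h⟩ jointlyNilp_Smat A hA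
  have key2 : scalMul A (f _ (Smat R d κ)) a (E (toWord [] hκ))
      = mulScal (f n X) A a (E (toWord [] hκ)) := by rw [key]
  have hRside : mulScal (f n X) A a (E (toWord [] hκ)) = f n X a b := by
    rw [mulScal, Matrix.of_apply, Finset.sum_eq_single b]
    · simp only [hAdef, Matrix.of_apply, Equiv.symm_apply_apply, wd_toWord]
      simp [Matrix.one_apply_eq]
    · intro c _ hc
      have hz : A c (E (toWord [] hκ)) = 0 := by
        simp only [hAdef, Matrix.of_apply, Equiv.symm_apply_apply, wd_toWord]
        simp [Matrix.one_apply_ne hc]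
      rw [hz, zero_smul]
    · intro hmem; exact absurd (Finset.mem_univ _) hmem
  have hLside : scalMul A (f _ (Smat R d κ)) a (E (toWord [] hκ))
      = ∑ lam : Word d κ, (((wd lam).map X).prod a b) •
          f _ (Smat R d κ) (E lam) (E (toWord [] hκ)) := by
    rw [scalMul, Matrix.of_apply]
    exact (Fintype.sum_equiv E
      (fun lam => (((wd lam).map X).prod a b) •
        f _ (Smat R d κ) (E lam) (E (toWord [] hκ)))
      (fun r => A a r • f _ (Smat R d κ) r (E (toWord [] hκ)))
      (fun lam => by simp [hAdef])).symm
  rw [← hRside, ← key2, hLside]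

end Aux
/-- Every nc function on the jointly nilpotent `d`-tuples of matrices
over `R` is the (finite) sum of its Taylor–Taylor series at `0`:
`f(X) = ∑_{w} X^w • c_w`, where `c_w` is the `(1, |w|+1)` entry of `f(T_w)`. -/
theorem nc_function_on_nilpotents_is_power_series
    {R : Type*} [CommRing R] {N : Type*} [AddCommGroup N] [Module R N] {d : ℕ}
    (f : ∀ n : ℕ, (Fin d → Matrix (Fin n) (Fin n) R) → Matrix (Fin n) (Fin n) N)
    (hds : ∀ (n m : ℕ) (X : Fin d → Matrix (Fin n) (Fin n) R)
      (Y : Fin d → Matrix (Fin m) (Fin m) R), JointlyNilp X → JointlyNilp Y →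
      f (n + m) (tDSum X Y) = dSum (f n X) (f m Y))
    (hsim : ∀ (n : ℕ) (X : Fin d → Matrix (Fin n) (Fin n) R)
      (S T : Matrix (Fin n) (Fin n) R), JointlyNilp X → S * T = 1 → T * S = 1 →
      JointlyNilp (fun i => S * X i * T) →
      f n (fun i => S * X i * T) = scalMul S (mulScal (f n X) T)) :
    ∀ (n : ℕ) (X : Fin d → Matrix (Fin n) (Fin n) R) (κ : ℕ),
      (∀ w : List (Fin d), κ ≤ w.length → (w.map X).prod = 0) →
      f n X = ∑ ℓ ∈ Finset.range κ, ∑ v : Fin ℓ → Fin d,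
        ((List.ofFn v).map X).prod.map
          (fun r => r • (f ((List.ofFn v).length + 1) (wordTuple R (List.ofFn v))
            0 (Fin.last (List.ofFn v).length))) := by

  intro n X κ h
  rcases Nat.eq_zero_or_pos κ with hκ0 | hκpos
  · subst hκ0
    ext a b
    have h1 : (1 : R) = 0 := by
      have := Matrix.ext_iff.mpr (h [] (by simp)) a a
      simpa [Matrix.one_apply_eq] using this
    have hx : f n X a b = (1 : R) • f n X a b := (one_smul R _).symm
    rw [hx, h1, zero_smul]
    simp
  · have hκ : ([] : List (Fin d)).length < κ := by simpa using hκpos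
    ext a b
    rw [expansion_entry f hds hsim hκ X h a b]
    have hrw : ∀ lam : Word d κ,
        f _ (Smat R d κ) (wEquiv d κ lam) (wEquiv d κ (toWord [] hκ))
          = f ((wd lam).length + 1) (wordTuple R (wd lam)) 0 (Fin.last (wd lam).length) := by
      intro lam
      have hkey := smat_entry_eq_wordTuple_entry f hds hsim hκ (wd lam) (wd_length_lt lam)
      rw [(show toWord (wd lam) (wd_length_lt lam) = lam from
        wd_injective (wd_toWord _ _))] at hkey
      exact hkey
    simp only [hrw]
    rw [Matrix.sum_apply]
    rw [← Finset.univ_sigma_univ, Finset.sum_sigma, ← Fin.sum_univ_eq_sum_range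
      (fun ℓ => (∑ v : Fin ℓ → Fin d, ((List.ofFn v).map X).prod.map
        (fun r => r • (f ((List.ofFn v).length + 1) (wordTuple R (List.ofFn v))
          0 (Fin.last (List.ofFn v).length)))) a b)]
    refine Finset.sum_congr rfl fun ℓ _ => ?_
    rw [Matrix.sum_apply]
    refine Finset.sum_congr rfl fun v _ => ?_
    rw [Matrix.map_apply]
    rfl
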